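/- Let λ > 0, M > 0 and δ = λM > 1. Then the equation λe^{pM} = λ + p has a unique negative solution p, given by p = (−δ − W₀(−δe^{−δ}))/M, where W₀ is the principal branch of the Lambert W function. -/

import Mathlib

open Real

/-- Principal branch `W₀` of the Lambert W function: the inverse of `w ↦ w·eʷ` on `[-1, ∞)`. -/
noncomputable def lambertW0 (x : ℝ) : ℝ :=
  Function.invFunOn (fun w => w * Real.exp w) (Set.Ici (-1)) x

lemma strictconv_root_lt {f : ℝ → ℝ} (hf : StrictConvexOn ℝ Set.univ f)
    {a b c : ℝ} (hab : a < b) (hbc : b < c) (ha : f a = 0) (hc : f c = 0) : f b < 0 := by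
  have hac : a < c := hab.trans hbc
  set t : ℝ := (c - b) / (c - a) with ht
  have hca : (0:ℝ) < c - a := by linarith
  have ht0 : 0 < t := div_pos (by linarith) hca
  have ht1 : 0 < 1 - t := by
    have : t < 1 := (div_lt_one hca).2 (by linarith)
    linarith
  have hb : t • a + (1 - t) • c = b := by
    field_simp [ht, smul_eq_mul]
    have htc : t * (c - a) = c - b := div_mul_cancel₀ _ hca.ne'
    linear_combination -htc
  have := hf.2 (Set.mem_univ a) (Set.mem_univ c) (ne_of_lt hac) ht0 ht1 (by ring)
  rw [hb, ha, hc] at this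
  simpa using this

lemma strictconv_aux (lam M : ℝ) (hlam : 0 < lam) (hM : 0 < M) :
    StrictConvexOn ℝ Set.univ (fun p : ℝ => lam * Real.exp (p * M) - (lam + p)) := by
  apply strictConvexOn_of_deriv2_pos convex_univ (Continuous.continuousOn (by continuity))
  intro x _
  have h1 : deriv (fun p : ℝ => lam * Real.exp (p * M) - (lam + p))
      = fun p : ℝ => lam * M * Real.exp (p * M) - 1 := by
    funext p
    have : HasDerivAt (fun p : ℝ => lam * Real.exp (p * M) - (lam + p))
        (lam * M * Real.exp (p * M) - 1) p := by
      have h := ((hasDerivAt_id p).mul_const M).exp.const_mul lam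
      have h2 := (hasDerivAt_const p lam).add (hasDerivAt_id p)
      exact (h.sub h2).congr_deriv (by simp only [id_eq, one_mul, zero_add]; ring)
    exact this.deriv
  have h2 : deriv^[2] (fun p : ℝ => lam * Real.exp (p * M) - (lam + p)) x
      = lam * M * M * Real.exp (x * M) := by
    rw [Function.iterate_succ, Function.iterate_one, Function.comp_apply, h1]
    have : HasDerivAt (fun p : ℝ => lam * M * Real.exp (p * M) - 1)
        (lam * M * M * Real.exp (x * M)) x := by
      have h := ((hasDerivAt_id x).mul_const M).exp.const_mul (lam * M)
      exact (h.sub (hasDerivAt_const x (1:ℝ))).congr_deriv (by simp only [id_eq, one_mul, sub_zero]; ring)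
    exact this.deriv
  rw [h2]
  positivity

/-- For `λ > 0`, `M > 0`, `δ = λM > 1`, the equation `λ e^{pM} = λ + p` has a unique negative
solution `p`, given by `p = (-δ - W₀(-δ e^{-δ}))/M`. -/
theorem stmt0 (lam M : ℝ) (hlam : 0 < lam) (hM : 0 < M)
    (δ : ℝ) (hδdef : δ = lam * M) (hδ : 1 < δ) :
    (∃! p : ℝ, p < 0 ∧ lam * Real.exp (p * M) = lam + p) ∧
    ((-δ - lambertW0 (-δ * Real.exp (-δ))) / M < 0 ∧
      lam * Real.exp (((-δ - lambertW0 (-δ * Real.exp (-δ))) / M) * M)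
        = lam + (-δ - lambertW0 (-δ * Real.exp (-δ))) / M) := by
  set x : ℝ := -δ * Real.exp (-δ) with hx
  -- x ∈ image of g on Ici (-1)
  have hδ0 : 0 < δ := by linarith
  have hxneg : x < 0 := by
    rw [hx]; nlinarith [Real.exp_pos (-δ)]
  have hxge : -Real.exp (-1) ≤ x := by
    -- δ e^{-δ} ≤ e^{-1}  ⇔  δ ≤ e^{δ-1}
    have h := Real.add_one_le_exp (δ - 1)
    have h2 : δ * Real.exp (-δ) ≤ Real.exp (δ - 1) * Real.exp (-δ) :=
      mul_le_mul_of_nonneg_right (by linarith) (Real.exp_pos _).le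
    have h3 : Real.exp (δ - 1) * Real.exp (-δ) = Real.exp (-1) := by
      rw [← Real.exp_add]; ring_nf
    have : δ * Real.exp (-δ) ≤ Real.exp (-1) := by linarith
    rw [hx]; linarith
  have himg : x ∈ (fun w => w * Real.exp w) '' (Set.Ici (-1)) := by
    have hcont : ContinuousOn (fun w : ℝ => w * Real.exp w) (Set.Icc (-1) 0) :=
      (continuous_id.mul Real.continuous_exp).continuousOn
    have hIVT := intermediate_value_Icc (by norm_num : (-1:ℝ) ≤ 0) hcont
    have hxmem : x ∈ Set.Icc ((-1:ℝ) * Real.exp (-1)) ((0:ℝ) * Real.exp 0) := by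
      constructor <;> simp <;> [linarith; linarith]
    obtain ⟨w, hw, hgw⟩ := hIVT hxmem
    exact ⟨w, Set.mem_Ici.2 hw.1, hgw⟩
  have hweq : lambertW0 x * Real.exp (lambertW0 x) = x :=
    Function.invFunOn_eq ((Set.mem_image _ _ _).1 himg)
  have hwmem : -1 ≤ lambertW0 x := Function.invFunOn_mem himg
  set w : ℝ := lambertW0 x with hwdef
  set p₀ : ℝ := (-δ - w) / M with hp₀
  have hp₀neg : p₀ < 0 := div_neg_of_neg_of_pos (by linarith) hM
  have hp₀M : p₀ * M = -δ - w := by rw [hp₀]; exact div_mul_cancel₀ _ hM.ne'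
  have hp₀eq : lam * Real.exp (p₀ * M) = lam + p₀ := by
    rw [hp₀M]
    have hew : Real.exp (-δ - w) = Real.exp (-δ) / Real.exp w := by
      rw [Real.exp_sub]
    have hexpw : Real.exp w ≠ 0 := (Real.exp_pos w).ne'
    have key : w * Real.exp w = -δ * Real.exp (-δ) := hweq
    have hmul : Real.exp (-δ - w) * Real.exp w = Real.exp (-δ) := by
      rw [← Real.exp_add]; ring_nf
    have h4 : δ * Real.exp (-δ - w) * Real.exp w = -w * Real.exp w := by
      rw [mul_assoc, hmul]; linarith [key]
    have h5 : δ * Real.exp (-δ - w) = -w := mul_right_cancel₀ hexpw h4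
    have h6 : (-δ - w) / M = lam * Real.exp (-δ - w) - lam := by
      rw [div_eq_iff hM.ne']; nlinarith [h5, hδdef]
    linarith [h6]
  refine ⟨⟨p₀, ⟨hp₀neg, hp₀eq⟩, ?_⟩, hp₀neg, hp₀eq⟩
  rintro q ⟨hqneg, hqeq⟩
  by_contra hne
  have hconv := strictconv_aux lam M hlam hM
  have hfq : lam * Real.exp (q * M) - (lam + q) = 0 := by linarith
  have hfp : lam * Real.exp (p₀ * M) - (lam + p₀) = 0 := by linarith
  have hf0 : lam * Real.exp ((0:ℝ) * M) - (lam + 0) = 0 := by simp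
  rcases lt_or_gt_of_ne hne with h | h
  · have := strictconv_root_lt hconv h hp₀neg hfq hf0
    linarith
  · have := strictconv_root_lt hconv h hqneg hfp hf0
    linarith
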